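/- With z = v/(1+3v+v^2), define A_h(z) = z(1+v) * ((1+2v)^{h-1} - v^h (v+2)^{h-1}) / ((1+2v)^{h-1} - v^{h+1} (v+2)^{h-1}). Then A_1 = z and A_{h+1} = -z + z(2-z)/(1 - A_h) for all h ≥ 1. -/

import Mathlib

/-- With `z = v/(1+3v+v²)`, the explicit rational expressions
`A_h = z(1+v)((1+2v)^{h-1} - v^h(v+2)^{h-1})/((1+2v)^{h-1} - v^{h+1}(v+2)^{h-1})`
satisfy `A₁ = z` and the recursion `A_{h+1} = -z + z(2-z)/(1-A_h)` for `h ≥ 1`. -/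
theorem stmt6 {K : Type*} [Field K] (v z : K) (A : ℕ → K)
    (hv : v ≠ 0) (hd : 1 + 3 * v + v ^ 2 ≠ 0)
    (hz : z = v / (1 + 3 * v + v ^ 2))
    (hA : ∀ h, 1 ≤ h → A h =
      z * (1 + v) * ((1 + 2 * v) ^ (h - 1) - v ^ h * (v + 2) ^ (h - 1)) /
        ((1 + 2 * v) ^ (h - 1) - v ^ (h + 1) * (v + 2) ^ (h - 1)))
    (hden : ∀ h, 1 ≤ h → (1 + 2 * v) ^ (h - 1) - v ^ (h + 1) * (v + 2) ^ (h - 1) ≠ 0)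
    (hone : ∀ h, 1 ≤ h → 1 - A h ≠ 0) :
    A 1 = z ∧ ∀ h, 1 ≤ h → A (h + 1) = -z + z * (2 - z) / (1 - A h) := by
  constructor
  · have h1 := hA 1 le_rfl
    have hd1 := hden 1 le_rfl
    norm_num at h1 hd1
    rw [h1, div_eq_iff hd1]; ring
  · intro h hh
    obtain ⟨k, rfl⟩ := Nat.exists_eq_add_of_le hh
    have hk1 : (1 : ℕ) ≤ 1 + k := Nat.le_add_right 1 k
    have hk2 : (1 : ℕ) ≤ 1 + k + 1 := by omega
    have e1 : 1 + k - 1 = k := by omega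
    have e2 : 1 + k + 1 - 1 = k + 1 := by omega
    have hAk := hA (1 + k) hk1
    have hAk1 := hA (1 + k + 1) hk2
    have hdk := hden (1 + k) hk1
    have hdk1 := hden (1 + k + 1) hk2
    have honek := hone (1 + k) hk1
    rw [e1] at hAk hdk
    rw [e2] at hAk1 hdk1
    rw [show (1 + k + 1 : ℕ) = k + 2 by omega] at hAk1 hdk1 ⊢
    rw [show (1 + k : ℕ) = k + 1 by omega] at hAk hdk honek ⊢
    have key : (1:K) - z * (1 + v) * ((1 + 2 * v) ^ k - v ^ (k + 1) * (v + 2) ^ k) /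
        ((1 + 2 * v) ^ k - v ^ (k + 1 + 1) * (v + 2) ^ k)
      = (((1 + 2 * v) ^ k - v ^ (k + 1 + 1) * (v + 2) ^ k) -
          z * (1 + v) * ((1 + 2 * v) ^ k - v ^ (k + 1) * (v + 2) ^ k)) /
        ((1 + 2 * v) ^ k - v ^ (k + 1 + 1) * (v + 2) ^ k) := by
      exact one_sub_div hdk
    have hE : (((1 + 2 * v) ^ k - v ^ (k + 1 + 1) * (v + 2) ^ k) -
        z * (1 + v) * ((1 + 2 * v) ^ k - v ^ (k + 1) * (v + 2) ^ k)) ≠ 0 := by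
      rw [hAk, key] at honek
      exact fun hc => honek (by rw [hc, zero_div])
    rw [hAk1, hAk, key, div_div_eq_mul_div]
    rw [add_div' _ _ _ hE, div_eq_div_iff hdk1 hE]
    subst hz
    have hd' : 1 + v * 3 + v ^ 2 ≠ 0 := by rwa [mul_comm v 3]
    field_simp
    ring
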